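/- Let I = [a,b] be a compact interval, ω > 0, σ_ω the piecewise-linear cutoff function (equal to 1 on [a,b], 0 outside (a-ω, b+ω), linear in between), and let g : ℝ → ℝ be Lipschitz with constant β. Then the truncated function g̃(x) := g(σ_ω(x)·x) is Lipschitz on ℝ with Lipschitz constant at most β(1 + max{|a|, |b|}/ω). -/

import Mathlib

set_option maxHeartbeats 4000000

theorem stmt_8 (a b ω β : ℝ) (hab : a < b) (hω : 0 < ω) (hβ : 0 ≤ β)
    (g : ℝ → ℝ) (hg : ∀ x y : ℝ, |g x - g y| ≤ β * |x - y|) :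
    let σ : ℝ → ℝ := fun x =>
      if x ∈ Set.Icc a b then 1
      else if x ∈ Set.Ioo (a - ω) a then x / ω + 1 - a / ω
      else if x ∈ Set.Ioo b (b + ω) then -x / ω + 1 + b / ω
      else 0
    ∀ x y : ℝ, |g (σ x * x) - g (σ y * y)| ≤ β * (1 + max |a| |b| / ω) * |x - y| := by
  intro σ x y
  set M := max |a| |b| with hM
  have ha2 : a ≤ M := le_trans (le_abs_self a) (le_max_left _ _)
  have ha1 : -M ≤ a := by
    have := neg_abs_le a; have := le_max_left |a| |b|; linarith
  have hb2 : b ≤ M := le_trans (le_abs_self b) (le_max_right _ _)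
  have hb1 : -M ≤ b := by
    have := neg_abs_le b; have := le_max_right |a| |b|; linarith
  have hM0 : 0 ≤ M := le_trans (abs_nonneg a) (le_max_left _ _)
  have hF1 : ∀ t : ℝ, t ≤ a - ω → ω * (σ t * t) = 0 := by
    intro t h; simp only [σ, Set.mem_Icc, Set.mem_Ioo]
    split_ifs with h1 h2 h3
    · exfalso; obtain ⟨p, q⟩ := h1; linarith
    · exfalso; obtain ⟨p, q⟩ := h2; linarith
    · exfalso; obtain ⟨p, q⟩ := h3; linarith
    · ring
  have hF2 : ∀ t : ℝ, a - ω < t → t < a → ω * (σ t * t) = (t + ω - a) * t := by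
    intro t h h'; simp only [σ, Set.mem_Icc, Set.mem_Ioo]
    split_ifs with h1 h2 h3
    · exfalso; obtain ⟨p, q⟩ := h1; linarith
    · field_simp <;> ring
    · exact absurd ⟨h, h'⟩ h2
    · exact absurd ⟨h, h'⟩ h2
  have hF3 : ∀ t : ℝ, a ≤ t → t ≤ b → ω * (σ t * t) = ω * t := by
    intro t h h'; simp only [σ, Set.mem_Icc, Set.mem_Ioo]
    rw [if_pos ⟨h, h'⟩]; ring
  have hF4 : ∀ t : ℝ, b < t → t < b + ω → ω * (σ t * t) = (-t + ω + b) * t := by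
    intro t h h'; simp only [σ, Set.mem_Icc, Set.mem_Ioo]
    split_ifs with h1 h2 h3
    · exfalso; obtain ⟨p, q⟩ := h1; linarith
    · exfalso; obtain ⟨p, q⟩ := h2; linarith
    · field_simp <;> ring
    · exact absurd ⟨h, h'⟩ h3
  have hF5 : ∀ t : ℝ, b + ω ≤ t → ω * (σ t * t) = 0 := by
    intro t h; simp only [σ, Set.mem_Icc, Set.mem_Ioo]
    split_ifs with h1 h2 h3
    · exfalso; obtain ⟨p, q⟩ := h1; linarith
    · exfalso; obtain ⟨p, q⟩ := h2; linarith
    · exfalso; obtain ⟨p, q⟩ := h3; linarith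
    · ring
  have cases5 : ∀ t : ℝ, t ≤ a - ω ∨ (a - ω < t ∧ t < a) ∨ (a ≤ t ∧ t ≤ b) ∨
      (b < t ∧ t < b + ω) ∨ b + ω ≤ t := by
    intro t
    rcases le_or_gt t (a - ω) with h | h
    · tauto
    rcases lt_or_ge t a with h2 | h2
    · tauto
    rcases le_or_gt t b with h3 | h3
    · tauto
    rcases lt_or_ge t (b + ω) with h4 | h4 <;> tauto
  have key : ω * |σ x * x - σ y * y| ≤ (ω + M) * |x - y| := by
    nth_rewrite 1 [← abs_of_pos hω]
    rw [← abs_mul, mul_sub]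
    rcases cases5 x with hx | ⟨hx1, hx2⟩ | ⟨hx1, hx2⟩ | ⟨hx1, hx2⟩ | hx <;>
      [rw [hF1 x hx]; rw [hF2 x hx1 hx2]; rw [hF3 x hx1 hx2];
       rw [hF4 x hx1 hx2]; rw [hF5 x hx]]
    all_goals (rcases cases5 y with hy | ⟨hy1, hy2⟩ | ⟨hy1, hy2⟩ | ⟨hy1, hy2⟩ | hy <;>
      [rw [hF1 y hy]; rw [hF2 y hy1 hy2]; rw [hF3 y hy1 hy2];
       rw [hF4 y hy1 hy2]; rw [hF5 y hy]])
    all_goals (rcases le_total x y with hxy | hxy <;>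
      [rw [abs_of_nonpos (by linarith : x - y ≤ 0)];
       rw [abs_of_nonneg (by linarith : (0:ℝ) ≤ x - y)]] <;>
      rw [abs_sub_le_iff] <;> constructor <;>
      nlinarith [sq_nonneg (x - y), sq_nonneg (x - a), sq_nonneg (y - a),
        sq_nonneg (x - b), sq_nonneg (y - b), mul_pos hω hω, hab.le, hω.le,
        sq_nonneg (x + y - 2*a), sq_nonneg (x + y - 2*b)])
  have h2 : |σ x * x - σ y * y| ≤ (1 + M / ω) * |x - y| := by
    rw [← mul_le_mul_iff_right₀ hω]
    calc ω * |σ x * x - σ y * y| ≤ (ω + M) * |x - y| := key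
      _ = ω * ((1 + M / ω) * |x - y|) := by field_simp <;> ring
  calc |g (σ x * x) - g (σ y * y)| ≤ β * |σ x * x - σ y * y| := hg _ _
    _ ≤ β * ((1 + M / ω) * |x - y|) := mul_le_mul_of_nonneg_left h2 hβ
    _ = β * (1 + M / ω) * |x - y| := by ring
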